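/- Let n > 0 and σ ∈ ℝ. Then the curve α(t) = (cos 2σt, −sin 2σt, 0), β(t) = (−sin 2σt, −cos 2σt, 0), M(t) = (0, 0, 2σ) is a solution of the system dM/dt = M×ω + e₁×α + e₂×β, dα/dt = α×ω, dβ/dt = β×ω with ω = M I⁻¹, I = diag(n,n,1); along it α×β ≡ −e₃, H = (1/2)(n(ω₁² + ω₂²) + ω₃²) − α₁ − β₂ ≡ 2σ², L = n(ω₁γ₁ + ω₂γ₂) + ω₃(γ₃ − 1) ≡ −4σ (γ = α×β), and in particular H = L²/8, so the values of (L, H) along this family fill the parabola h = ℓ²/8. -/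

import Mathlib

open Matrix Real

/-- For every `σ`, the curve `α = (cos 2σt, −sin 2σt, 0)`,
`β = (−sin 2σt, −cos 2σt, 0)`, `M = (0, 0, 2σ)` (uniform rotation about the
third axis of inertia) solves the equations of motion; along it `α×β ≡ −e₃`,
`H ≡ 2σ²`, `L ≡ −4σ`, and in particular `H = L²/8`, so the values `(L, H)`
fill the parabola `h = ℓ²/8`. -/
theorem uniform_rotations
    (n σ : ℝ) (hn : 0 < n)
    (α β M ω γ : ℝ → Fin 3 → ℝ)
    (hA : ∀ t, α t = ![cos (2 * σ * t), -sin (2 * σ * t), 0])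
    (hB : ∀ t, β t = ![-sin (2 * σ * t), -cos (2 * σ * t), 0])
    (hM : ∀ t, M t = ![0, 0, 2 * σ])
    (hω : ∀ t, ω t = M t ᵥ* (Matrix.diagonal ![n, n, 1])⁻¹)
    (hγ : ∀ t, γ t = α t ⨯₃ β t) :
    (∀ t, HasDerivAt M
        (M t ⨯₃ ω t + (![1, 0, 0] : Fin 3 → ℝ) ⨯₃ α t
          + (![0, 1, 0] : Fin 3 → ℝ) ⨯₃ β t) t
      ∧ HasDerivAt α (α t ⨯₃ ω t) t
      ∧ HasDerivAt β (β t ⨯₃ ω t) t)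
    ∧ (∀ t, γ t = ![0, 0, -1])
    ∧ (∀ t, (1 / 2) * (n * (ω t 0 ^ 2 + ω t 1 ^ 2) + ω t 2 ^ 2) - α t 0 - β t 1
              = 2 * σ ^ 2)
    ∧ (∀ t, n * (ω t 0 * γ t 0 + ω t 1 * γ t 1) + ω t 2 * (γ t 2 - 1) = -4 * σ)
    ∧ (2 * σ ^ 2 = (-4 * σ) ^ 2 / 8) := by

  have hωf : ∀ t, ω t = ![0, 0, 2 * σ] := by
    intro t
    have hinv : (Matrix.diagonal ![n, n, 1])⁻¹
        = Matrix.diagonal ![n⁻¹, n⁻¹, 1] := by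
      refine Matrix.inv_eq_right_inv ?_
      rw [Matrix.diagonal_mul_diagonal]
      ext i j
      fin_cases i <;> fin_cases j <;>
        simp [Matrix.diagonal_apply, Matrix.one_apply, mul_inv_cancel₀ hn.ne']
    rw [hω, hM, hinv]
    funext i
    fin_cases i <;> simp [Matrix.vecMul_diagonal]
  have hlin : ∀ t : ℝ, HasDerivAt (fun t => 2 * σ * t) (2 * σ) t := fun t => by
    simpa using (hasDerivAt_id t).const_mul (2 * σ)
  refine ⟨fun t => ?_, fun t => ?_, fun t => ?_, fun t => ?_, by ring⟩
  · refine ⟨?_, ?_, ?_⟩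
    · have h0 : (M t ⨯₃ ω t + (![1, 0, 0] : Fin 3 → ℝ) ⨯₃ α t
          + (![0, 1, 0] : Fin 3 → ℝ) ⨯₃ β t) = (0 : Fin 3 → ℝ) := by
        funext i
        fin_cases i <;>
          simp [hM, hA, hB, hωf, cross_apply] <;> ring
      rw [h0, funext hM]
      exact hasDerivAt_const t _
    · have h0 : α t ⨯₃ ω t
          = ![-sin (2 * σ * t) * (2 * σ), -(cos (2 * σ * t) * (2 * σ)), 0] := by
        funext i
        fin_cases i <;> simp [hA, hωf, cross_apply] <;> ring
      rw [h0, funext hA]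
      rw [hasDerivAt_pi]
      intro i
      fin_cases i
      · simpa using (hlin t).cos
      · simpa using ((hlin t).sin).fun_neg
      · simpa using hasDerivAt_const t (0 : ℝ)
    · have h0 : β t ⨯₃ ω t
          = ![-(cos (2 * σ * t) * (2 * σ)), sin (2 * σ * t) * (2 * σ), 0] := by
        funext i
        fin_cases i <;> simp [hB, hωf, cross_apply] <;> ring
      rw [h0, funext hB]
      rw [hasDerivAt_pi]
      intro i
      fin_cases i
      · simpa using ((hlin t).sin).fun_neg
      · simpa using ((hlin t).cos).fun_neg
      · simpa using hasDerivAt_const t (0 : ℝ)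
  · rw [hγ, hA, hB]
    funext i
    fin_cases i <;> simp [cross_apply] <;>
      nlinarith [sin_sq_add_cos_sq (2 * σ * t)]
  · simp [hωf, hA, hB]
    ring
  · have hγf : γ t = ![0, 0, -1] := by
      rw [hγ, hA, hB]
      funext i
      fin_cases i <;> simp [cross_apply] <;>
        nlinarith [sin_sq_add_cos_sq (2 * σ * t)]
    simp [hωf, hγf]
    ring
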